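/- Second-order existential quantification over a relation P can be simulated by spatial conjunction: let none_but_P(e) assert that e(Q) = ∅ for all symbols Q ≠ P. Then for any predicate F on structures and any structure e with e(P) = U^{ar(P)} (full relation at P), the following holds: (∃ r ⊆ U^{ar(P)}, F(e[P:=r])) if and only if ⟦none_but_P ⋆ F⟧e. -/

import Mathlib

variable {U : Type*} {Sig : Type*}

def Struc (U : Type*) (Sig : Type*) (ar : Sig → ℕ) : Type _ :=
  (P : Sig) → Set (Fin (ar P) → U)

def splitS {ar : Sig → ℕ} (e e1 e2 : Struc U Sig ar) : Prop :=
  ∀ P : Sig, e P = e1 P ∪ e2 P ∧ e1 P ∩ e2 P = ∅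

def star {ar : Sig → ℕ} (F1 F2 : Struc U Sig ar → Prop) (e : Struc U Sig ar) : Prop :=
  ∃ e1 e2 : Struc U Sig ar, splitS e e1 e2 ∧ F1 e1 ∧ F2 e2

def noneBut {ar : Sig → ℕ} (P : Sig) (e : Struc U Sig ar) : Prop :=
  ∀ Q : Sig, Q ≠ P → e Q = ∅

theorem stmt_14 [Fintype Sig] [DecidableEq Sig] {ar : Sig → ℕ}
    (P : Sig) (F : Struc U Sig ar → Prop) (e : Struc U Sig ar)
    (hfull : e P = Set.univ) :
    (∃ r : Set (Fin (ar P) → U), F (Function.update e P r)) ↔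
      star (noneBut P) F e := by
  constructor
  · rintro ⟨r, hF⟩
    refine ⟨Function.update (fun _ => (∅ : Set _)) P rᶜ, Function.update e P r, ?_, ?_, hF⟩
    · intro Q
      by_cases h : Q = P
      · subst h
        simp [show Function.update e Q r Q = r from Function.update_self _ _ _, hfull, Set.compl_union_self, Set.compl_inter_self]
      · simp [show Function.update e P r Q = e Q from Function.update_of_ne h _ _, Function.update_of_ne h]
    · intro Q hQ
      simp [Function.update_of_ne hQ]
  · rintro ⟨e1, e2, hsplit, hnone, hF⟩
    refine ⟨e2 P, ?_⟩
    have : Function.update e P (e2 P) = e2 := by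
      funext Q
      by_cases h : Q = P
      · subst h; exact Function.update_self _ _ _
      · rw [show Function.update e P (e2 P) Q = e Q from Function.update_of_ne h _ _]
        have h1 := (hsplit Q).1
        rw [hnone Q h, Set.empty_union] at h1
        exact h1
    rwa [this]
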